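/- Let V and T̂ be finite-dimensional real vector spaces with n̂ = dim T̂ ≥ 2, and let ω̂ be a T̂-valued polylagrangian (k+1)-form of rank N on V with polylagrangian subspace L. Then L equals the sum, over all nonzero t* ∈ T̂*, of the kernels of the projected forms ω_{t*} = ⟨t*, ω̂⟩; in particular L is unique. -/

import Mathlib

open Module

/-- `L` is a polylagrangian subspace for the `T`-valued `(k+1)`-form `ω`. -/
def IsPolyLag {V T : Type*} [AddCommGroup V] [Module ℝ V] [AddCommGroup T] [Module ℝ T]
    {k : ℕ} (ω : V [⋀^Fin (k+1)]→ₗ[ℝ] T) (L : Submodule ℝ V) : Prop :=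
  ∀ α : V [⋀^Fin k]→ₗ[ℝ] T,
    (∃ v ∈ L, ∀ x : Fin k → V, ω (Fin.cons v x) = α x)
      ↔ ∀ (x : Fin k → V) (i : Fin k), x i ∈ L → α x = 0

section Aux

variable {V T : Type*} [AddCommGroup V] [Module ℝ V] [AddCommGroup T] [Module ℝ T]

lemma alt_sum_apply {ι' : Type*} {s : Finset ι'} {p : ℕ} (F : ι' → (V [⋀^Fin p]→ₗ[ℝ] T))
    (x : Fin p → V) : (∑ a ∈ s, F a) x = ∑ a ∈ s, F a x := by
  induction s using Finset.cons_induction with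
  | empty => simp
  | cons a s ha ih => rw [Finset.sum_cons, Finset.sum_cons, AlternatingMap.add_apply, ih]

/-- A form (with any number `p > dim (V⧸L)` of arguments) vanishing whenever one
argument lies in `L` is zero. -/
lemma aux_vanish_zero [FiniteDimensional ℝ V] {p : ℕ} (L : Submodule ℝ V)
    (hp : finrank ℝ (V ⧸ L) < p) (γ : V [⋀^Fin p]→ₗ[ℝ] T)
    (hγ : ∀ (x : Fin p → V) (i : Fin p), x i ∈ L → γ x = 0) : γ = 0 := by
  obtain ⟨W, hW⟩ := Submodule.exists_isCompl L
  have hrankW : finrank ℝ W < p := by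
    rw [← LinearEquiv.finrank_eq (Submodule.quotientEquivOfIsCompl L W hW)]
    exact hp
  ext x
  have hdec : ∀ v : V, ∃ l w : V, l ∈ L ∧ w ∈ W ∧ v = l + w := by
    intro v
    have hv : v ∈ L ⊔ W := by rw [hW.sup_eq_top]; trivial
    obtain ⟨l, hl, w, hw, h⟩ := Submodule.mem_sup.mp hv
    exact ⟨l, w, hl, hw, h.symm⟩
  choose l w hl hw hx using fun i => hdec (x i)
  have hxe : x = l + w := funext hx
  have hterm : ∀ s : Finset (Fin p), γ (s.piecewise l w) = 0 := by
    intro s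
    rcases s.eq_empty_or_nonempty with rfl | ⟨i, hi⟩
    · rw [Finset.piecewise_empty]
      apply γ.map_linearDependent
      intro hind
      have hind' : LinearIndependent ℝ (fun i : Fin p => (⟨w i, hw i⟩ : W)) := by
        apply LinearIndependent.of_comp W.subtype
        exact hind
      have := hind'.fintype_card_le_finrank
      simp only [Fintype.card_fin] at this
      omega
    · apply hγ _ i
      rw [Finset.piecewise_eq_of_mem _ _ _ hi]
      exact hl i
  have := MultilinearMap.map_add_univ γ.toMultilinearMap l w
  have hγx : γ x = ∑ s : Finset (Fin p), γ (s.piecewise l w) := by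
    rw [hxe]; exact this
  rw [hγx, Finset.sum_congr rfl fun s _ => hterm s, Finset.sum_const, smul_zero]
  rfl

lemma aux_rank [FiniteDimensional ℝ V] {m : ℕ}
    (ω : V [⋀^Fin (m+1+1)]→ₗ[ℝ] T) (hω : ω ≠ 0)
    (L : Submodule ℝ V) (hL : IsPolyLag ω L) :
    m + 1 ≤ finrank ℝ (V ⧸ L) := by
  by_contra h
  push_neg at h
  apply hω
  have key : ∀ v ∈ L, ∀ y : Fin (m+1) → V, ω (Fin.cons v y) = 0 := by
    intro v hv y
    have h1 := (hL (ω.curryLeft v)).mp ⟨v, hv, fun x => rfl⟩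
    have h2 : ω.curryLeft v = 0 := aux_vanish_zero L (by omega) _ h1
    have h3 := DFunLike.congr_fun h2 y
    simp at h3; exact h3
  have hvan : ∀ (x : Fin (m+1+1) → V) (i : Fin (m+1+1)), x i ∈ L → ω x = 0 := by
    intro x i hxi
    by_cases hi : i = 0
    · subst hi
      rw [← Fin.cons_self_tail x]
      exact key _ hxi _
    · have h2 : ω (x ∘ Equiv.swap i 0) = - ω x := ω.map_swap x hi
      have h3 : ω (x ∘ Equiv.swap i 0) = 0 := by
        rw [← Fin.cons_self_tail (x ∘ Equiv.swap i 0)]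
        apply key
        simpa [Equiv.swap_apply_right] using hxi
      rw [h3] at h2
      exact (neg_eq_zero.mp h2.symm)
  exact aux_vanish_zero L (by omega) ω hvan

lemma aux_ker_le [FiniteDimensional ℝ V] {m : ℕ}
    (ω : V [⋀^Fin (m+1+1)]→ₗ[ℝ] T) (hω : ω ≠ 0)
    (L : Submodule ℝ V) (hL : IsPolyLag ω L) (t : Module.Dual ℝ T) (ht : t ≠ 0) :
    LinearMap.ker (t.compAlternatingMap ω).curryLeft ≤ L := by
  intro u hu
  rw [LinearMap.mem_ker] at hu
  have hu' : ∀ x : Fin (m+1) → V, t (ω (Fin.cons u x)) = 0 := by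
    intro x
    have := DFunLike.congr_fun hu x
    simp at this; exact this
  by_contra huL
  have hmn : m + 1 ≤ finrank ℝ (V ⧸ L) := aux_rank ω hω L hL
  let b : Basis (Fin (finrank ℝ (V ⧸ L))) ℝ (V ⧸ L) := Module.finBasis ℝ (V ⧸ L)
  have hπu : L.mkQ u ≠ 0 := by
    simpa [Submodule.Quotient.mk_eq_zero] using huL
  obtain ⟨i₀, hi₀⟩ : ∃ i, b.coord i (L.mkQ u) ≠ 0 := by
    by_contra hc
    push_neg at hc
    exact hπu (b.forall_coord_eq_zero_iff.mp hc)
  set σ : Fin (m+1) → Fin (finrank ℝ (V ⧸ L)) :=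
    (Equiv.swap (Fin.castLE hmn 0) i₀) ∘ Fin.castLE hmn with hσ
  have hσinj : Function.Injective σ :=
    (Equiv.injective _).comp (Fin.strictMono_castLE hmn).injective
  have hσ0 : σ 0 = i₀ := Equiv.swap_apply_left _ _
  set f : Fin (m+1) → Module.Dual ℝ V := fun j => (b.coord (σ j)).comp L.mkQ with hf
  set β : V [⋀^Fin (m+1)]→ₗ[ℝ] ℝ :=
    Matrix.detRowAlternating.compLinearMap (LinearMap.pi f) with hβdef
  have hβ : ∀ x : Fin (m+1) → V, β x = Matrix.det (Matrix.of fun i j => f j (x i)) :=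
    fun x => rfl
  have hβL : ∀ (x : Fin (m+1) → V) (i : Fin (m+1)), x i ∈ L → β x = 0 := by
    intro x i hxi
    rw [hβ]
    apply Matrix.det_eq_zero_of_row_eq_zero i
    intro j
    have hmk : L.mkQ (x i) = 0 := (Submodule.Quotient.mk_eq_zero L).mpr hxi
    show (b.coord (σ j)) (L.mkQ (x i)) = 0
    rw [hmk, map_zero]
  obtain ⟨y, hy⟩ : ∃ y, t y ≠ 0 := by
    by_contra hc
    push_neg at hc
    exact ht (LinearMap.ext fun z => by simp [hc z])
  set t' : T := (t y)⁻¹ • y with ht'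
  have htt : t t' = 1 := by
    simp [ht', inv_mul_cancel₀ hy]
  set α : V [⋀^Fin (m+1)]→ₗ[ℝ] T :=
    (LinearMap.toSpanSingleton ℝ T t').compAlternatingMap β with hαdef
  have hα : ∀ x, α x = β x • t' := fun x => rfl
  obtain ⟨v, hv, hvα⟩ := (hL α).mpr (by
    intro x i hxi
    rw [hα, hβL x i hxi, zero_smul])
  have hβu : ∀ w : Fin m → V, β (Fin.cons u w) = 0 := by
    intro w
    have h1 : t (ω (Fin.cons v (Fin.cons u w))) = β (Fin.cons u w) := by
      rw [hvα, hα, map_smul, htt, smul_eq_mul, mul_one]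
    have h2 : Fin.cons v (Fin.cons u w) =
        (Fin.cons u (Fin.cons v w)) ∘ Equiv.swap (0 : Fin (m+1+1)) 1 := by
      funext i
      refine Fin.cases ?_ (fun j => ?_) i
      · simp [Equiv.swap_apply_left]
      · refine Fin.cases ?_ (fun l => ?_) j
        · simp [Equiv.swap_apply_right, Fin.succ_zero_eq_one]
      
        · have hne0 : (l.succ.succ : Fin (m+1+1)) ≠ 0 := Fin.succ_ne_zero _
          have hne1 : (l.succ.succ : Fin (m+1+1)) ≠ 1 := by
            rw [← Fin.succ_zero_eq_one]
            exact fun hh => Fin.succ_ne_zero l (Fin.succ_injective _ hh)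
          simp [Function.comp, Equiv.swap_apply_of_ne_of_ne hne0 hne1]
    rw [h2, ω.map_swap (Fin.cons u (Fin.cons v w)) (show (0 : Fin (m+1+1)) ≠ 1 by simp [Fin.ext_iff]), map_neg] at h1
    rw [hu' (Fin.cons v w)] at h1
    linarith [h1]
  choose w0 hw0 using fun i : Fin m => L.mkQ_surjective (b (σ i.succ))
  set M : Matrix (Fin (m+1)) (Fin (m+1)) ℝ :=
    Matrix.of fun i j => f j ((Fin.cons u w0 : Fin (m+1) → V) i) with hM
  have hMsucc : ∀ (i' : Fin m) (j : Fin (m+1)),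
      M i'.succ j = if σ i'.succ = σ j then 1 else 0 := by
    intro i' j
    simp only [hM, Matrix.of_apply, hf, LinearMap.comp_apply, Fin.cons_succ, hw0,
      Basis.coord_apply, Basis.repr_self_apply]
  have hup : M.BlockTriangular id := by
    intro i j hij
    obtain ⟨i', rfl⟩ := Fin.eq_succ_of_ne_zero (show i ≠ 0 from fun h0 => by
      subst h0; exact Fin.not_lt_zero j hij)
    rw [hMsucc]
    rw [if_neg]
    intro hc
    exact absurd (hσinj hc) (by intro hh; rw [← hh] at hij; exact lt_irrefl _ hij)
  have hdet : M.det = b.coord i₀ (L.mkQ u) := by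
    rw [Matrix.det_of_upperTriangular hup]
    rw [Fin.prod_univ_succ]
    have h1 : ∀ i' : Fin m, M i'.succ i'.succ = 1 := fun i' => by rw [hMsucc, if_pos rfl]
    rw [Finset.prod_congr rfl fun i' _ => h1 i', Finset.prod_const_one, mul_one]
    simp [hM, hf, hσ0]
  have := hβu w0
  rw [hβ] at this
  rw [show (Matrix.of fun i j => f j ((Fin.cons u w0 : Fin (m+1) → V) i)) = M from rfl, hdet] at this
  exact hi₀ this

lemma aux_le_sup [FiniteDimensional ℝ T] {m : ℕ} (hT : 2 ≤ finrank ℝ T)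
    (ω : V [⋀^Fin (m+1+1)]→ₗ[ℝ] T)
    (L : Submodule ℝ V) (hL : IsPolyLag ω L) :
    L ≤ ⨆ (t : Module.Dual ℝ T) (_ : t ≠ 0),
        LinearMap.ker (t.compAlternatingMap ω).curryLeft := by
  intro v hv
  set S := ⨆ (t : Module.Dual ℝ T) (_ : t ≠ 0),
      LinearMap.ker (t.compAlternatingMap ω).curryLeft with hS
  set d := finrank ℝ T with hd
  let bT : Basis (Fin d) ℝ T := Module.finBasis ℝ T
  have hcoordne : ∀ a : Fin d, bT.coord a ≠ 0 := by
    intro a hc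
    have h1 : bT.coord a (bT a) = 1 := by simp [Basis.coord_apply]
    rw [hc] at h1
    simp at h1
  have hLv : ∀ (x : Fin (m+1) → V) (i : Fin (m+1)), x i ∈ L → ω (Fin.cons v x) = 0 :=
    (hL (ω.curryLeft v)).mp ⟨v, hv, fun x => rfl⟩
  set αa : Fin d → (V [⋀^Fin (m+1)]→ₗ[ℝ] T) := fun a =>
    (LinearMap.toSpanSingleton ℝ T (bT a)).compAlternatingMap
      ((bT.coord a).compAlternatingMap (ω.curryLeft v)) with hαadef
  have hαa : ∀ a x, αa a x = bT.coord a (ω (Fin.cons v x)) • bT a := fun a x => rfl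
  have hmem : ∀ a, ∃ va ∈ L, ∀ x, ω (Fin.cons va x) = αa a x := by
    intro a
    apply (hL (αa a)).mpr
    intro x i hxi
    rw [hαa, hLv x i hxi, map_zero, zero_smul]
  choose va hva hvaω using hmem
  have hvaS : ∀ a, va a ∈ S := by
    intro a
    obtain ⟨a', ha'⟩ : ∃ a' : Fin d, a' ≠ a := by
      by_cases h0 : a = ⟨0, by omega⟩
      · exact ⟨⟨1, by omega⟩, by simp [h0, Fin.ext_iff]⟩
      · exact ⟨⟨0, by omega⟩, fun hh => h0 hh.symm⟩
    have hker : va a ∈ LinearMap.ker ((bT.coord a').compAlternatingMap ω).curryLeft := by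
      rw [LinearMap.mem_ker]
      ext x
      have h1 : (((bT.coord a').compAlternatingMap ω).curryLeft (va a)) x
          = bT.coord a' (ω (Fin.cons (va a) x)) := rfl
      have h2 : bT.coord a' (bT a) = 0 := by
        rw [Basis.coord_apply, Basis.repr_self_apply, if_neg (fun hh => ha' hh.symm)]
      rw [h1, hvaω a x, hαa, map_smul, h2, smul_zero]
      rfl
    exact Submodule.mem_iSup_of_mem (bT.coord a')
      (Submodule.mem_iSup_of_mem (hcoordne a') hker)
  have hrep : ∀ x : Fin (m+1) → V, ω (Fin.cons v x) = ∑ a, αa a x := by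
    intro x
    have := bT.sum_repr (ω (Fin.cons v x))
    calc ω (Fin.cons v x) = ∑ a, bT.repr (ω (Fin.cons v x)) a • bT a := this.symm
      _ = ∑ a, αa a x := by
          apply Finset.sum_congr rfl
          intro a _
          rw [hαa, Basis.coord_apply]
  have hr : v - ∑ a, va a ∈ S := by
    have hker : ∀ x : Fin (m+1) → V, ω (Fin.cons (v - ∑ a, va a) x) = 0 := by
      intro x
      have hc : ω.curryLeft (v - ∑ a, va a)
          = ω.curryLeft v - ∑ a, ω.curryLeft (va a) := by
        rw [map_sub, map_sum]
      have h1 : ω (Fin.cons (v - ∑ a, va a) x) = (ω.curryLeft (v - ∑ a, va a)) x := rfl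
      rw [h1, hc, AlternatingMap.sub_apply, alt_sum_apply]
      have h2 : (ω.curryLeft v) x = ω (Fin.cons v x) := rfl
      have h3 : ∀ a, (ω.curryLeft (va a)) x = αa a x := fun a => hvaω a x
      rw [h2, hrep x, Finset.sum_congr rfl fun a _ => h3 a, sub_self]
    refine Submodule.mem_iSup_of_mem (bT.coord ⟨0, by omega⟩)
      (Submodule.mem_iSup_of_mem (hcoordne _) ?_)
    rw [LinearMap.mem_ker]
    ext x
    have h1 : (((bT.coord ⟨0, by omega⟩).compAlternatingMap ω).curryLeft
        (v - ∑ a, va a)) x = bT.coord ⟨0, by omega⟩ (ω (Fin.cons (v - ∑ a, va a) x)) := rfl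
    rw [h1, hker x, map_zero]
    rfl
  have hsum : v = (v - ∑ a, va a) + ∑ a, va a := by abel
  rw [hsum]
  exact S.add_mem hr (S.sum_mem fun a _ => hvaS a)

lemma aux_eq [FiniteDimensional ℝ V] [FiniteDimensional ℝ T] {k : ℕ} (hk : 1 ≤ k)
    (hT : 2 ≤ finrank ℝ T)
    (ω : V [⋀^Fin (k+1)]→ₗ[ℝ] T) (hω : ω ≠ 0)
    (L : Submodule ℝ V) (hL : IsPolyLag ω L) :
    L = ⨆ (t : Module.Dual ℝ T) (_ : t ≠ 0),
        LinearMap.ker (t.compAlternatingMap ω).curryLeft := by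
  obtain ⟨m, rfl⟩ : ∃ m, k = m + 1 := ⟨k - 1, by omega⟩
  refine le_antisymm (aux_le_sup hT ω L hL) ?_
  exact iSup_le fun t => iSup_le fun ht => aux_ker_le ω hω L hL t ht

end Aux

/-- For a `T`-valued polylagrangian `(k+1)`-form with `dim T ≥ 2`, the polylagrangian
subspace `L` is the sum over all nonzero `t* ∈ T*` of the kernels of the projected
forms `ω_{t*}`; in particular, `L` is unique. -/
theorem stmt7 {V T : Type*} [AddCommGroup V] [Module ℝ V] [FiniteDimensional ℝ V]
    [AddCommGroup T] [Module ℝ T] [FiniteDimensional ℝ T] {k N : ℕ} (hk : 1 ≤ k)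
    (hT : 2 ≤ Module.finrank ℝ T)
    (ω : V [⋀^Fin (k+1)]→ₗ[ℝ] T) (hω : ω ≠ 0)
    (L : Submodule ℝ V) (hL : IsPolyLag ω L) (hN : Module.finrank ℝ (V ⧸ L) = N) :
    L = ⨆ (t : Module.Dual ℝ T) (_ : t ≠ 0),
          LinearMap.ker (t.compAlternatingMap ω).curryLeft
      ∧ ∀ L' : Submodule ℝ V, IsPolyLag ω L' → L' = L := by
  exact ⟨aux_eq hk hT ω hω L hL,
    fun L' hL' => (aux_eq hk hT ω hω L' hL').trans (aux_eq hk hT ω hω L hL).symm⟩
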